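/- Let A and B be strongly commuting closed operators on H, and suppose ξ ∈ D(A*A) ∩ D(B*B). Then with the bounding projections q_s of A and f_t of B, the vector Bξ lies in D(A), the vector Aξ lies in D(B), and ABξ = BAξ equals the double limit lim_{s,t→∞} A q_s B f_t ξ. -/

import Mathlib

open Filter Topology

variable {H : Type*} [NormedAddCommGroup H] [InnerProductSpace ℂ H] [CompleteSpace H]

/-- A (typically closed, densely defined) operator `A` is affiliated with the von Neumann
algebra `M` if every unitary in the commutant of `M` leaves the domain of `A` invariant and
commutes with `A`. -/
def Affiliated (M : VonNeumannAlgebra H) (A : H →ₗ.[ℂ] H) : Prop :=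
  ∀ u : H →L[ℂ] H, u ∈ M.commutant → u ∈ unitary (H →L[ℂ] H) →
    (∀ ξ : H, ξ ∈ A.domain → u ξ ∈ A.domain) ∧
    ∀ (ξ : A.domain) (h : u ↑ξ ∈ A.domain), A ⟨u ↑ξ, h⟩ = u (A ξ)

/-- Two operators commute strongly if the von Neumann algebras they generate commute;
equivalently, there exist commuting von Neumann algebras `M`, `N` with `A` affiliated
with `M` and `B` affiliated with `N`. -/
def StronglyCommutes (A B : H →ₗ.[ℂ] H) : Prop :=
  ∃ M N : VonNeumannAlgebra H,
    (∀ x ∈ M, ∀ y ∈ N, Commute x y) ∧ Affiliated M A ∧ Affiliated N B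


/-- An abstract family of "right bounding projections" `q t = χ_{[0,t]}(|A|)` of a closed
operator `A = U|A|`: orthogonal projections, increasing, converging strongly to `1`, taking
values in `D(A)` with `A ∘ q t` bounded, lying in every von Neumann algebra with which `A` is
affiliated, and compatible with `A*A` (namely `A q_t η ∈ D(A*)` and
`A* A q_t η = q_t A* A η` whenever `η ∈ D(A*A)`). -/
structure IsRightBoundingFamily (A : H →ₗ.[ℂ] H) (q : ℝ → H →L[ℂ] H) : Prop where
  proj : ∀ t, IsIdempotentElem (q t) ∧ IsSelfAdjoint (q t)
  mono : ∀ s t, s ≤ t → q s * q t = q s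
  tendsto_one : ∀ ξ : H, Tendsto (fun t => q t ξ) atTop (nhds ξ)
  mem_domain : ∀ (t : ℝ) (ξ : H), q t ξ ∈ A.domain
  bounded : ∀ t, ∃ C, ∀ ξ : H, ‖A ⟨q t ξ, mem_domain t ξ⟩‖ ≤ C * ‖ξ‖
  mem_vN : ∀ M : VonNeumannAlgebra H, Affiliated M A → ∀ t, q t ∈ M
  compat : ∀ (t : ℝ) (ξ : H) (hξ : ξ ∈ A.domain) (hξ' : A ⟨ξ, hξ⟩ ∈ A.adjoint.domain),
    ∃ h : A ⟨q t ξ, mem_domain t ξ⟩ ∈ A.adjoint.domain,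
      A.adjoint ⟨A ⟨q t ξ, mem_domain t ξ⟩, h⟩ = q t (A.adjoint ⟨A ⟨ξ, hξ⟩, hξ'⟩)

/-! ### Auxiliary lemmas -/

theorem pmap_congr (A : H →ₗ.[ℂ] H) {v w : H} (e : v = w) (hv : v ∈ A.domain)
    (hw : w ∈ A.domain) : A ⟨v, hv⟩ = A ⟨w, hw⟩ := by subst e; rfl

theorem sa_inner {p : H →L[ℂ] H} (hp : IsSelfAdjoint p) (x y : H) :
    (inner ℂ (p x) y : ℂ) = inner ℂ x (p y) := by
  have h : ContinuousLinearMap.adjoint p = p := by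
    rw [← ContinuousLinearMap.star_eq_adjoint]; exact hp
  calc (inner ℂ (p x) y : ℂ) = inner ℂ ((ContinuousLinearMap.adjoint p) x) y := by rw [h]
    _ = inner ℂ x (p y) := ContinuousLinearMap.adjoint_inner_left p y x

theorem proj_contract {p : H →L[ℂ] H} (hp1 : IsIdempotentElem p) (hp2 : IsSelfAdjoint p)
    (x : H) : ‖p x‖ ≤ ‖x‖ := by
  rcases eq_or_ne (p x) 0 with h | h
  · simp [h]
  have h2 : p (p x) = p x := by
    conv_lhs => rw [← ContinuousLinearMap.mul_apply, hp1.eq]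
  have h1 : (inner ℂ (p x) (p x) : ℂ) = inner ℂ x (p x) := by
    rw [sa_inner hp2, h2]
  have h3 : ‖p x‖ * ‖p x‖ ≤ ‖x‖ * ‖p x‖ := by
    have hle : ‖(inner ℂ (p x) (p x) : ℂ)‖ ≤ ‖x‖ * ‖p x‖ := by
      rw [h1]; exact norm_inner_le_norm x (p x)
    have hsq : (inner ℂ (p x) (p x) : ℂ) = ((‖p x‖ : ℂ)) ^ 2 := inner_self_eq_norm_sq_to_K (p x)
    rw [hsq] at hle
    calc ‖p x‖ * ‖p x‖ = ‖((‖p x‖ : ℂ)) ^ 2‖ := by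
          rw [norm_pow, Complex.norm_real, Real.norm_eq_abs, abs_of_nonneg (norm_nonneg _)]
          ring
      _ ≤ ‖x‖ * ‖p x‖ := hle
  exact le_of_mul_le_mul_right h3 (norm_pos_iff.mpr h)

theorem fam_min {A : H →ₗ.[ℂ] H} {q : ℝ → H →L[ℂ] H} (hq : IsRightBoundingFamily A q)
    (s s' : ℝ) : q s * q s' = q (min s s') := by
  rcases le_total s s' with h | h
  · rw [min_eq_left h]; exact hq.mono s s' h
  · rw [min_eq_right h]
    have h1 := hq.mono s' s h
    calc q s * q s' = star (q s' * q s) := by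
          rw [star_mul, (hq.proj s).2.star_eq, (hq.proj s').2.star_eq]
      _ = star (q s') := by rw [h1]
      _ = q s' := (hq.proj s').2.star_eq

theorem comm_apply {x y : H →L[ℂ] H} (h : x * y = y * x) (v : H) : x (y v) = y (x v) := by
  have h' := congrArg (fun T : H →L[ℂ] H => T v) h
  simpa using h'

/-- Cauchy criterion from an inner-product formula `re ⟪g p, g q⟫ = c (p ⊓ q)` with `c`
convergent. -/
theorem cauchySeq_of_inner_inf {ι : Type*} [Nonempty ι] [Lattice ι]
    (g : ι → H) (c : ι → ℝ) (L : ℝ)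
    (hgc : ∀ p q : ι, (inner ℂ (g p) (g q) : ℂ).re = c (p ⊓ q))
    (hc : Tendsto c atTop (𝓝 L)) : CauchySeq g := by
  rw [Metric.cauchySeq_iff]
  intro ε hε
  have hε4 : (0 : ℝ) < ε ^ 2 / 4 := by positivity
  obtain ⟨N, hN⟩ := (Metric.tendsto_atTop.mp hc) (ε ^ 2 / 4) hε4
  refine ⟨N, fun p hp q hq => ?_⟩
  have hkey : dist (g p) (g q) ^ 2 = c p + c q - 2 * c (p ⊓ q) := by
    have hnorm : ‖g p - g q‖ ^ 2 = ((inner ℂ (g p - g q) (g p - g q) : ℂ)).re := by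
      rw [inner_self_eq_norm_sq_to_K]
      norm_cast
    have hexp : (inner ℂ (g p - g q) (g p - g q) : ℂ) =
        inner ℂ (g p) (g p) - inner ℂ (g p) (g q) - inner ℂ (g q) (g p) + inner ℂ (g q) (g q) :=
      inner_sub_sub_self (g p) (g q)
    have hqp : ((inner ℂ (g q) (g p) : ℂ)).re = c (p ⊓ q) := by
      rw [hgc q p, inf_comm]
    rw [dist_eq_norm, hnorm, hexp]
    simp only [Complex.add_re, Complex.sub_re]
    rw [hgc p p, hgc q q, hgc p q, hqp, inf_idem, inf_idem]
    ring
  have h1 := abs_lt.mp (by rw [← Real.dist_eq]; exact hN p hp : |c p - L| < ε ^ 2 / 4)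
  have h2 := abs_lt.mp (by rw [← Real.dist_eq]; exact hN q hq : |c q - L| < ε ^ 2 / 4)
  have h3 := abs_lt.mp
    (by rw [← Real.dist_eq]; exact hN _ (le_inf hp hq) : |c (p ⊓ q) - L| < ε ^ 2 / 4)
  have hlt : dist (g p) (g q) ^ 2 < ε ^ 2 := by
    rw [hkey]; nlinarith [h1.1, h1.2, h2.1, h2.2, h3.1, h3.2]
  exact lt_of_pow_lt_pow_left₀ 2 hε.le hlt

/-- From a double limit along `atTop ×ˢ atTop` and existence of inner ℂ limits, the iterated
limit converges to the double limit. -/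
theorem iterated_limit {α β : Type*} [Nonempty α] [SemilatticeSup α] [Nonempty β]
    [SemilatticeSup β] (g : α × β → H) (L : H) (hg : Tendsto g (atTop ×ˢ atTop) (𝓝 L))
    (h : α → H) (hh : ∀ s, Tendsto (fun t => g (s, t)) atTop (𝓝 (h s))) :
    Tendsto h atTop (𝓝 L) := by
  rw [Metric.tendsto_atTop]
  intro ε hε
  have hball : {p : α × β | dist (g p) L < ε / 2} ∈ atTop ×ˢ atTop := by
    have hmem := hg (Metric.ball_mem_nhds L (by positivity : (0:ℝ) < ε / 2))
    exact hmem
  obtain ⟨S, hS, T, hT, hST⟩ := Filter.mem_prod_iff.mp hball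
  obtain ⟨N₁, hN₁⟩ := Filter.mem_atTop_sets.mp hS
  obtain ⟨N₂, hN₂⟩ := Filter.mem_atTop_sets.mp hT
  refine ⟨N₁, fun s hs => ?_⟩
  have hds : dist (h s) L ≤ ε / 2 := by
    have htend : Tendsto (fun t => dist (g (s, t)) L) atTop (𝓝 (dist (h s) L)) :=
      (hh s).dist tendsto_const_nhds
    refine le_of_tendsto htend ?_
    filter_upwards [Filter.mem_atTop N₂] with t ht
    exact le_of_lt (hST (Set.mk_mem_prod (hN₁ s hs) (hN₂ t ht)))
  calc dist (h s) L ≤ ε / 2 := hds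
    _ < ε := by linarith

/-- Every element of the commutant of `M` (not just the unitaries) commutes with a closed
operator affiliated with `M`. -/
theorem aff_comm {M : VonNeumannAlgebra H} {A : H →ₗ.[ℂ] H} (hA : Affiliated M A)
    (hAc : A.IsClosed) {x : H →L[ℂ] H} (hx : x ∈ M.commutant) (ζ : H) (hζ : ζ ∈ A.domain) :
    ∃ h : x ζ ∈ A.domain, A ⟨x ζ, h⟩ = x (A ⟨ζ, hζ⟩) := by
  haveI : (𝓝[≠] (0:ℝ)).NeBot := inferInstance
  have hrs : ∀ (r : ℝ) (w : H), r • w = ((r : ℂ)) • w := fun r w =>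
    (IsScalarTower.algebraMap_smul ℂ r w).symm
  have hIC : ∀ w : H, (-Complex.I) • (Complex.I • w) = w := by
    intro w
    rw [smul_smul, neg_mul, Complex.I_mul_I, neg_neg, one_smul]
  -- the self-adjoint case
  have hsa : ∀ a : H →L[ℂ] H, a ∈ M.commutant → IsSelfAdjoint a →
      ∀ (v : H) (hv : v ∈ A.domain), ∃ h : a v ∈ A.domain, A ⟨a v, h⟩ = a (A ⟨v, hv⟩) := by
    intro a haM hasa v hv
    set c : H →L[ℂ] H := Complex.I • a with hc
    set u : ℝ → H →L[ℂ] H := fun r => NormedSpace.exp ((r : ℂ) • c) with hu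
    have hcommM : ∀ g ∈ M, Commute g c := by
      intro g hg
      have hca : Commute g a := VonNeumannAlgebra.mem_commutant_iff.mp haM g hg
      exact hca.smul_right Complex.I
    have hu_mem : ∀ r : ℝ, u r ∈ M.commutant := fun r =>
      VonNeumannAlgebra.mem_commutant_iff.mpr fun g hg =>
        (((hcommM g hg).smul_right ((r : ℂ))).exp_right).eq
    have hstar : ∀ r : ℝ, star (u r) = NormedSpace.exp (-((r : ℂ) • c)) := by
      intro r
      rw [hu]
      simp only
      rw [NormedSpace.star_exp]
      congr 1
      rw [star_smul, hc, star_smul, hasa.star_eq]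
      simp [Complex.star_def, Complex.conj_I]
    have hunit : ∀ r : ℝ, u r ∈ unitary (H →L[ℂ] H) := by
      intro r
      letI : NormedAlgebra ℚ (H →L[ℂ] H) := NormedAlgebra.restrictScalars ℚ ℂ (H →L[ℂ] H)
      rw [Unitary.mem_iff]
      constructor
      · rw [hstar, ← NormedSpace.exp_add_of_commute ((Commute.refl ((r : ℂ) • c)).neg_left)]
        simp
      · rw [hstar, ← NormedSpace.exp_add_of_commute ((Commute.refl ((r : ℂ) • c)).neg_right)]
        simp
    have humem : ∀ (r : ℝ) (w : H), w ∈ A.domain → u r w ∈ A.domain := fun r w hw =>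
      (hA (u r) (hu_mem r) (hunit r)).1 w hw
    have huval : ∀ (r : ℝ) (w : H) (hw : w ∈ A.domain) (h2 : u r w ∈ A.domain),
        A ⟨u r w, h2⟩ = u r (A ⟨w, hw⟩) := fun r w hw h2 =>
      (hA (u r) (hu_mem r) (hunit r)).2 ⟨w, hw⟩ h2
    -- derivative of r ↦ u r w at 0 is c w
    have happ : ∀ w : H, HasDerivAt (fun r : ℝ => u r w) (c w) 0 := by
      intro w
      have hder : HasDerivAt (fun z : ℂ => NormedSpace.exp (z • c)) c ((0:ℝ):ℂ) := by
        have hd := hasDerivAt_exp_smul_const (𝕂 := ℂ) c ((0:ℝ):ℂ)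
        simpa using hd
      have hof : HasDerivAt (fun r : ℝ => (r : ℂ)) 1 0 := by
        simpa using (hasDerivAt_id (0:ℝ)).ofReal_comp
      have hderR : HasDerivAt (fun r : ℝ => NormedSpace.exp ((r : ℂ) • c)) c 0 := by
        have hcomp := HasDerivAt.scomp (x := (0:ℝ))
          (g₁ := fun z : ℂ => NormedSpace.exp (z • c)) (h := fun r : ℝ => (r : ℂ))
          hder hof
        simpa [Function.comp_def] using hcomp
      have happly := ((ContinuousLinearMap.apply ℂ H w).restrictScalars
        ℝ).hasFDerivAt.comp_hasDerivAt (0:ℝ) hderR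
      simpa [Function.comp_def, hu] using happly
    have hslope : ∀ w : H, Tendsto (fun r : ℝ => r⁻¹ • (u r w - w)) (𝓝[≠] (0:ℝ))
        (𝓝 (c w)) := by
      intro w
      have h0 : u 0 w = w := by
        simp [hu, NormedSpace.exp_zero]
      have hts := hasDerivAt_iff_tendsto_slope_zero.mp (happ w)
      simpa [h0] using hts
    -- use closedness of the graph
    have hφmem : ∀ r : ℝ,
        (r⁻¹ • (u r v - v), r⁻¹ • (u r (A ⟨v, hv⟩) - A ⟨v, hv⟩)) ∈ A.graph := by
      intro r
      rw [LinearPMap.mem_graph_iff]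
      have hmemv : ((r : ℂ)⁻¹ • (u r v - v)) ∈ A.domain :=
        A.domain.smul_mem _ (A.domain.sub_mem (humem r v hv) hv)
      have hcoe : ∀ w : H, r⁻¹ • w = ((r : ℂ))⁻¹ • w := by
        intro w
        rw [hrs r⁻¹ w, Complex.ofReal_inv]
      refine ⟨⟨r⁻¹ • (u r v - v), by rw [hcoe]; exact hmemv⟩, rfl, ?_⟩
      rw [hcoe (u r (A ⟨v, hv⟩) - A ⟨v, hv⟩)]
      have hsub : (⟨r⁻¹ • (u r v - v), by rw [hcoe]; exact hmemv⟩ : A.domain) =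
          ((r : ℂ))⁻¹ • (⟨u r v, humem r v hv⟩ - ⟨v, hv⟩ : A.domain) := by
        apply Subtype.ext
        simp [hcoe]
      rw [hsub, A.map_smul, A.map_sub, huval r v hv]
    have hφlim : Tendsto
        (fun r : ℝ => (r⁻¹ • (u r v - v), r⁻¹ • (u r (A ⟨v, hv⟩) - A ⟨v, hv⟩)))
        (𝓝[≠] (0:ℝ)) (𝓝 (c v, c (A ⟨v, hv⟩))) :=
      (hslope v).prodMk_nhds (hslope (A ⟨v, hv⟩))
    have hgr : (c v, c (A ⟨v, hv⟩)) ∈ A.graph := by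
      have := hAc.mem_of_tendsto hφlim (Eventually.of_forall fun r => hφmem r)
      exact this
    obtain ⟨y, hy1x, hy2x⟩ := (LinearPMap.mem_graph_iff A).mp hgr
    have hy1 : (y : H) = c v := hy1x
    have hy2 : A y = c (A ⟨v, hv⟩) := hy2x
    have hav : a v = (-Complex.I) • (c v) := by
      rw [hc]
      rw [ContinuousLinearMap.smul_apply, hIC]
    have hmem : a v ∈ A.domain := by
      rw [hav, ← hy1]
      exact A.domain.smul_mem _ y.2
    refine ⟨hmem, ?_⟩
    have hsub2 : (⟨a v, hmem⟩ : A.domain) = (-Complex.I) • y := by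
      apply Subtype.ext
      simp [hav, ← hy1]
    rw [hsub2, A.map_smul, hy2]
    rw [hc, ContinuousLinearMap.smul_apply, hIC]
  -- decomposition of a general element into self-adjoint parts
  set a : H →L[ℂ] H := (2⁻¹ : ℂ) • (x + star x) with ha_def
  set b : H →L[ℂ] H := (2⁻¹ : ℂ) • (Complex.I • x + star (Complex.I • x)) with hb_def
  have hsx : star (Complex.I • x) = (-Complex.I) • star x := by
    rw [star_smul]
    congr 1
    simp [Complex.star_def, Complex.conj_I]
  have haM : a ∈ M.commutant := by
    refine VonNeumannAlgebra.mem_commutant_iff.mpr fun g hg => ?_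
    have hx1 : g * x = x * g := VonNeumannAlgebra.mem_commutant_iff.mp hx g hg
    have hx2 : g * star x = star x * g :=
      VonNeumannAlgebra.mem_commutant_iff.mp (star_mem hx) g hg
    rw [ha_def, mul_smul_comm, smul_mul_assoc, mul_add, add_mul, hx1, hx2]
  have hbM : b ∈ M.commutant := by
    refine VonNeumannAlgebra.mem_commutant_iff.mpr fun g hg => ?_
    have hx1 : g * x = x * g := VonNeumannAlgebra.mem_commutant_iff.mp hx g hg
    have hx2 : g * star x = star x * g :=
      VonNeumannAlgebra.mem_commutant_iff.mp (star_mem hx) g hg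
    rw [hb_def, hsx, mul_smul_comm, smul_mul_assoc, mul_add, add_mul, mul_smul_comm,
      smul_mul_assoc, mul_smul_comm, smul_mul_assoc, hx1, hx2]
  have hstar2 : star (2⁻¹ : ℂ) = (2⁻¹ : ℂ) := by
    simp
  have hasa : IsSelfAdjoint a := by
    rw [IsSelfAdjoint, ha_def, star_smul, hstar2, star_add, star_star, add_comm]
  have hbsa : IsSelfAdjoint b := by
    rw [IsSelfAdjoint, hb_def, star_smul, hstar2, star_add, star_star, add_comm]
  have hpoint : ∀ w : H, a w + (-Complex.I) • b w = x w := by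
    intro w
    rw [ha_def, hb_def, hsx]
    simp only [ContinuousLinearMap.smul_apply, ContinuousLinearMap.add_apply,
      ContinuousLinearMap.neg_apply]
    rw [smul_comm (-Complex.I) ((2:ℂ)⁻¹)]
    rw [smul_add (-Complex.I), hIC, smul_smul (-Complex.I) (-Complex.I),
      neg_mul_neg, Complex.I_mul_I, neg_one_smul]
    rw [← smul_add]
    have hcollect : x w + star x w + (x w + -star x w) = (2:ℂ) • x w := by
      rw [two_smul]; abel
    rw [hcollect, smul_smul]
    norm_num
  obtain ⟨hma, hea⟩ := hsa a haM hasa ζ hζ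
  obtain ⟨hmb, heb⟩ := hsa b hbM hbsa ζ hζ
  have hmem : x ζ ∈ A.domain := by
    rw [← hpoint ζ]
    exact A.domain.add_mem hma (A.domain.smul_mem _ hmb)
  refine ⟨hmem, ?_⟩
  have hsub3 : (⟨x ζ, hmem⟩ : A.domain) =
      (⟨a ζ, hma⟩ : A.domain) + (-Complex.I) • (⟨b ζ, hmb⟩ : A.domain) := by
    apply Subtype.ext
    simp [← hpoint ζ]
  rw [hsub3, A.map_add, A.map_smul, hea, heb, hpoint]

/-- Every element of the commutant also commutes with the adjoint of an affiliated closed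
densely defined operator. -/
theorem aff_adj {M : VonNeumannAlgebra H} {A : H →ₗ.[ℂ] H} (hA : Affiliated M A)
    (hAc : A.IsClosed) (hAd : Dense (A.domain : Set H)) {x : H →L[ℂ] H}
    (hx : x ∈ M.commutant) (η : H) (hη : η ∈ A.adjoint.domain) :
    ∃ h : x η ∈ A.adjoint.domain, A.adjoint ⟨x η, h⟩ = x (A.adjoint ⟨η, hη⟩) := by
  have hxs : star x ∈ M.commutant := star_mem hx
  have key : ∀ v : A.domain, (inner ℂ (x (A.adjoint ⟨η, hη⟩)) (v : H) : ℂ) =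
      inner ℂ (x η) (A v) := by
    intro v
    obtain ⟨hm, he⟩ := aff_comm hA hAc hxs (v : H) v.2
    have step1 : (inner ℂ (x (A.adjoint ⟨η, hη⟩)) (v : H) : ℂ) =
        inner ℂ (A.adjoint ⟨η, hη⟩) (star x (v : H)) := by
      rw [ContinuousLinearMap.star_eq_adjoint]
      exact (ContinuousLinearMap.adjoint_inner_right x (A.adjoint ⟨η, hη⟩) (v : H)).symm
    have step2 : (inner ℂ (A.adjoint ⟨η, hη⟩) (star x (v : H)) : ℂ) =
        inner ℂ η (A ⟨star x (v : H), hm⟩) := by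
      have := LinearPMap.adjoint_isFormalAdjoint hAd ⟨η, hη⟩ ⟨star x (v : H), hm⟩
      exact this
    have step3 : A ⟨star x (v : H), hm⟩ = star x (A v) := he
    have step4 : (inner ℂ η (star x (A v)) : ℂ) = inner ℂ (x η) (A v) := by
      rw [ContinuousLinearMap.star_eq_adjoint]
      exact ContinuousLinearMap.adjoint_inner_right x η (A v)
    rw [step1, step2, step3, step4]
  have hmem : x η ∈ A.adjoint.domain :=
    LinearPMap.mem_adjoint_domain_of_exists _ ⟨x (A.adjoint ⟨η, hη⟩), fun v => key v⟩
  exact ⟨hmem, LinearPMap.adjoint_apply_eq hAd _ fun v => key v⟩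

/-- The bounded operator `A ∘ q s` associated to a right bounding family. -/
noncomputable def IsRightBoundingFamily.clm {A : H →ₗ.[ℂ] H} {q : ℝ → H →L[ℂ] H}
    (hq : IsRightBoundingFamily A q) (s : ℝ) : H →L[ℂ] H :=
  LinearMap.mkContinuousOfExistsBound
    { toFun := fun ζ => A ⟨q s ζ, hq.mem_domain s ζ⟩
      map_add' := fun ζ η => by
        have hsub : (⟨q s (ζ + η), hq.mem_domain s (ζ + η)⟩ : A.domain) =
            (⟨q s ζ, hq.mem_domain s ζ⟩ : A.domain) + ⟨q s η, hq.mem_domain s η⟩ := by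
          apply Subtype.ext; simp
        rw [hsub, A.map_add]
      map_smul' := fun m ζ => by
        have hsub : (⟨q s (m • ζ), hq.mem_domain s (m • ζ)⟩ : A.domain) =
            m • (⟨q s ζ, hq.mem_domain s ζ⟩ : A.domain) := by
          apply Subtype.ext; simp
        rw [hsub, A.map_smul]
        rfl }
    (hq.bounded s)

theorem IsRightBoundingFamily.clm_apply {A : H →ₗ.[ℂ] H} {q : ℝ → H →L[ℂ] H}
    (hq : IsRightBoundingFamily A q) (s : ℝ) (ζ : H) :
    hq.clm s ζ = A ⟨q s ζ, hq.mem_domain s ζ⟩ := rfl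

/-- `A (q s ζ) → A ζ` for `ζ ∈ D(A*A)`. -/
theorem tendsto_bdd {A : H →ₗ.[ℂ] H} (hAc : A.IsClosed) (hAd : Dense (A.domain : Set H))
    {q : ℝ → H →L[ℂ] H} (hq : IsRightBoundingFamily A q)
    (ζ : H) (hζ : ζ ∈ A.domain) (hζ' : A ⟨ζ, hζ⟩ ∈ A.adjoint.domain) :
    Tendsto (fun s => A ⟨q s ζ, hq.mem_domain s ζ⟩) atTop (𝓝 (A ⟨ζ, hζ⟩)) := by
  set w := A.adjoint ⟨A ⟨ζ, hζ⟩, hζ'⟩ with hw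
  have key : ∀ s s' : ℝ, (inner ℂ (A ⟨q s ζ, hq.mem_domain s ζ⟩)
      (A ⟨q s' ζ, hq.mem_domain s' ζ⟩) : ℂ) = inner ℂ w (q (min s s') ζ) := by
    intro s s'
    obtain ⟨h1, he1⟩ := hq.compat s ζ hζ hζ'
    have form := LinearPMap.adjoint_isFormalAdjoint hAd
      ⟨A ⟨q s ζ, hq.mem_domain s ζ⟩, h1⟩ ⟨q s' ζ, hq.mem_domain s' ζ⟩
    calc (inner ℂ (A ⟨q s ζ, hq.mem_domain s ζ⟩) (A ⟨q s' ζ, hq.mem_domain s' ζ⟩) : ℂ)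
        = inner ℂ (A.adjoint ⟨A ⟨q s ζ, hq.mem_domain s ζ⟩, h1⟩) (q s' ζ) := form.symm
      _ = inner ℂ (q s w) (q s' ζ) := by rw [he1]
      _ = inner ℂ w (q s (q s' ζ)) := sa_inner (hq.proj s).2 w (q s' ζ)
      _ = inner ℂ w (q (min s s') ζ) := by
          rw [← ContinuousLinearMap.mul_apply, fam_min hq]
  have hcs : CauchySeq (fun s => A ⟨q s ζ, hq.mem_domain s ζ⟩) := by
    refine cauchySeq_of_inner_inf _ (fun s => (inner ℂ w (q s ζ) : ℂ).re)
      ((inner ℂ w ζ : ℂ).re) (fun p p' => ?_) ?_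
    · exact congrArg Complex.re (key p p')
    · have h1 : Tendsto (fun s => (inner ℂ w (q s ζ) : ℂ)) atTop (𝓝 (inner ℂ w ζ)) :=
        tendsto_const_nhds.inner (hq.tendsto_one ζ)
      exact (Complex.continuous_re.tendsto _).comp h1
  obtain ⟨v, hv⟩ := cauchySeq_tendsto_of_complete hcs
  have hgr : ((ζ : H), v) ∈ A.graph := by
    have htd : Tendsto (fun s => ((q s ζ : H), A ⟨q s ζ, hq.mem_domain s ζ⟩)) atTop
        (𝓝 (ζ, v)) := (hq.tendsto_one ζ).prodMk_nhds hv
    exact hAc.mem_of_tendsto htd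
      (Eventually.of_forall fun s => A.mem_graph ⟨q s ζ, hq.mem_domain s ζ⟩)
  obtain ⟨y, hy1x, hy2x⟩ := (LinearPMap.mem_graph_iff A).mp hgr
  have hy1 : (y : H) = ζ := hy1x
  have hy2 : A y = v := hy2x
  have hAv : A ⟨ζ, hζ⟩ = v := by
    rw [← hy2]
    exact pmap_congr A hy1.symm hζ y.2
  rw [hAv]
  exact hv

/-- Lemma 1.A.5 + Proposition 1.A.6(b): if `A`, `B` are strongly commuting
densely defined closed operators and `ξ ∈ D(A*A) ∩ D(B*B)`, then `Bξ ∈ D(A)`, `Aξ ∈ D(B)`,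
`ABξ = BAξ`, and this common value equals the double limit `lim_{s,t→∞} A q_s B f_t ξ`
formed with the right bounding projections `q` of `A` and `f` of `B`. -/
theorem stmt12 (A B : H →ₗ.[ℂ] H)
    (hAc : A.IsClosed) (hBc : B.IsClosed)
    (hAd : Dense (A.domain : Set H)) (hBd : Dense (B.domain : Set H))
    (hAB : StronglyCommutes A B)
    (q f : ℝ → H →L[ℂ] H)
    (hq : IsRightBoundingFamily A q) (hf : IsRightBoundingFamily B f)
    (ξ : H) (hξA : ξ ∈ A.domain) (hξB : ξ ∈ B.domain)
    (hAA : A ⟨ξ, hξA⟩ ∈ A.adjoint.domain)   -- `ξ ∈ D(A*A)`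
    (hBB : B ⟨ξ, hξB⟩ ∈ B.adjoint.domain) : -- `ξ ∈ D(B*B)`
    ∃ (h₁ : B ⟨ξ, hξB⟩ ∈ A.domain) (h₂ : A ⟨ξ, hξA⟩ ∈ B.domain),
      A ⟨B ⟨ξ, hξB⟩, h₁⟩ = B ⟨A ⟨ξ, hξA⟩, h₂⟩ ∧
      Tendsto (fun st : ℝ × ℝ =>
          A ⟨q st.1 (B ⟨f st.2 ξ, hf.mem_domain st.2 ξ⟩), hq.mem_domain st.1 _⟩)
        (atTop ×ˢ atTop) (nhds (A ⟨B ⟨ξ, hξB⟩, h₁⟩)) := by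
  obtain ⟨M, N, hMN, hAfA, hAfB⟩ := hAB
  have hqM : ∀ s, q s ∈ M := hq.mem_vN M hAfA
  have hfN : ∀ t, f t ∈ N := hf.mem_vN N hAfB
  have hqN : ∀ s, q s ∈ N.commutant := fun s =>
    VonNeumannAlgebra.mem_commutant_iff.mpr fun g hg => ((hMN (q s) (hqM s) g hg).symm).eq
  have hfM : ∀ t, f t ∈ M.commutant := fun t =>
    VonNeumannAlgebra.mem_commutant_iff.mpr fun g hg => (hMN g hg (f t) (hfN t)).eq
  set Ts : ℝ → H →L[ℂ] H := hq.clm with hTs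
  set Rt : ℝ → H →L[ℂ] H := hf.clm with hRt
  -- `Rt t ∈ M'` and `Ts s ∈ N'`
  have hRtM : ∀ t, Rt t ∈ M.commutant := by
    intro t
    refine VonNeumannAlgebra.mem_commutant_iff.mpr fun g hg => ?_
    have hgN : g ∈ N.commutant :=
      VonNeumannAlgebra.mem_commutant_iff.mpr fun y hy => ((hMN g hg y hy).symm).eq
    ext v
    simp only [ContinuousLinearMap.mul_apply]
    obtain ⟨hm, he⟩ := aff_comm hAfB hBc hgN (f t v) (hf.mem_domain t v)
    rw [hRt, hf.clm_apply, hf.clm_apply, ← he]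
    exact pmap_congr B (comm_apply (hMN g hg (f t) (hfN t)).eq v) hm (hf.mem_domain t (g v))
  have hTsN : ∀ s, Ts s ∈ N.commutant := by
    intro s
    refine VonNeumannAlgebra.mem_commutant_iff.mpr fun g hg => ?_
    have hgM : g ∈ M.commutant :=
      VonNeumannAlgebra.mem_commutant_iff.mpr fun y hy => (hMN y hy g hg).eq
    ext v
    simp only [ContinuousLinearMap.mul_apply]
    obtain ⟨hm, he⟩ := aff_comm hAfA hAc hgM (q s v) (hq.mem_domain s v)
    rw [hTs, hq.clm_apply, hq.clm_apply, ← he]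
    exact pmap_congr A (comm_apply ((hMN (q s) (hqM s) g hg).symm).eq v) hm
      (hq.mem_domain s (g v))
  have hcommQR : ∀ (s t : ℝ) (v : H), q s (Rt t v) = Rt t (q s v) := fun s t v =>
    comm_apply (VonNeumannAlgebra.mem_commutant_iff.mp (hRtM t) (q s) (hqM s)) v
  -- the double-indexed net
  set gg : ℝ × ℝ → H := fun p => Ts p.1 (Rt p.2 ξ) with hgg_def
  -- the swap identity
  have hswap : ∀ s t : ℝ, gg (s, t) = Rt t (Ts s ξ) := by
    intro s t
    obtain ⟨hm, he⟩ := aff_comm hAfA hAc (hRtM t) (q s ξ) (hq.mem_domain s ξ)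
    calc gg (s, t) = A ⟨q s (Rt t ξ), hq.mem_domain s (Rt t ξ)⟩ := rfl
      _ = A ⟨Rt t (q s ξ), hm⟩ :=
          pmap_congr A (hcommQR s t ξ) (hq.mem_domain s (Rt t ξ)) hm
      _ = Rt t (A ⟨q s ξ, hq.mem_domain s ξ⟩) := he
      _ = Rt t (Ts s ξ) := rfl
  set ζA := A.adjoint ⟨A ⟨ξ, hξA⟩, hAA⟩ with hζA
  set ζB := B.adjoint ⟨B ⟨ξ, hξB⟩, hBB⟩ with hζB
  -- the inner-product formula
  have hInner : ∀ s t s' t' : ℝ, (inner ℂ (gg (s, t)) (gg (s', t')) : ℂ) =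
      inner ℂ ζA (f (min t t') (q (min s s') ζB)) := by
    intro s t s' t'
    -- A-side adjoint computation
    obtain ⟨hm1, he1⟩ := aff_comm hAfA hAc (hRtM t) ξ hξA
    have hm2' : A ⟨Rt t ξ, hm1⟩ ∈ A.adjoint.domain := by
      rw [he1]
      exact (aff_adj hAfA hAc hAd (hRtM t) (A ⟨ξ, hξA⟩) hAA).1
    obtain ⟨hm2, he2⟩ := aff_adj hAfA hAc hAd (hRtM t) (A ⟨ξ, hξA⟩) hAA
    obtain ⟨hg1, hge1⟩ := hq.compat s (Rt t ξ) hm1 hm2'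
    have hAdjVal : A.adjoint ⟨A ⟨q s (Rt t ξ), hq.mem_domain s (Rt t ξ)⟩, hg1⟩ =
        q s (Rt t ζA) := by
      rw [hge1]
      congr 1
      calc A.adjoint ⟨A ⟨Rt t ξ, hm1⟩, hm2'⟩
          = A.adjoint ⟨Rt t (A ⟨ξ, hξA⟩), hm2⟩ := pmap_congr A.adjoint he1 hm2' hm2
        _ = Rt t ζA := he2
    have form := LinearPMap.adjoint_isFormalAdjoint hAd
      ⟨A ⟨q s (Rt t ξ), hq.mem_domain s (Rt t ξ)⟩, hg1⟩
      ⟨q s' (Rt t' ξ), hq.mem_domain s' (Rt t' ξ)⟩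
    set m := min s s' with hm
    -- B-side computation
    obtain ⟨hv, hev⟩ := aff_comm hAfB hBc (hqN m) ξ hξB
    have hv2' : B ⟨q m ξ, hv⟩ ∈ B.adjoint.domain := by
      rw [hev]
      exact (aff_adj hAfB hBc hBd (hqN m) (B ⟨ξ, hξB⟩) hBB).1
    obtain ⟨hv2, hev2⟩ := aff_adj hAfB hBc hBd (hqN m) (B ⟨ξ, hξB⟩) hBB
    obtain ⟨hg2, hge2⟩ := hf.compat t' (q m ξ) hv hv2'
    have hBdjVal : B.adjoint ⟨B ⟨f t' (q m ξ), hf.mem_domain t' (q m ξ)⟩, hg2⟩ =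
        f t' (q m ζB) := by
      rw [hge2]
      congr 1
      calc B.adjoint ⟨B ⟨q m ξ, hv⟩, hv2'⟩
          = B.adjoint ⟨q m (B ⟨ξ, hξB⟩), hv2⟩ := pmap_congr B.adjoint hev hv2' hv2
        _ = q m ζB := hev2
    have formB := LinearPMap.adjoint_isFormalAdjoint hBd
      ⟨B ⟨f t' (q m ξ), hf.mem_domain t' (q m ξ)⟩, hg2⟩
      ⟨f t ζA, hf.mem_domain t ζA⟩
    calc (inner ℂ (gg (s, t)) (gg (s', t')) : ℂ)
        = inner ℂ (A.adjoint ⟨A ⟨q s (Rt t ξ), hq.mem_domain s (Rt t ξ)⟩, hg1⟩)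
            (q s' (Rt t' ξ)) := form.symm
      _ = inner ℂ (q s (Rt t ζA)) (q s' (Rt t' ξ)) := by rw [hAdjVal]
      _ = inner ℂ (Rt t ζA) (q s (q s' (Rt t' ξ))) := sa_inner (hq.proj s).2 _ _
      _ = inner ℂ (Rt t ζA) (q m (Rt t' ξ)) := by
          rw [← ContinuousLinearMap.mul_apply, fam_min hq]
      _ = inner ℂ (Rt t ζA) (Rt t' (q m ξ)) := by rw [hcommQR m t' ξ]
      _ = (starRingEnd ℂ) (inner ℂ (Rt t' (q m ξ)) (Rt t ζA)) := (inner_conj_symm _ _).symm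
      _ = (starRingEnd ℂ) (inner ℂ (B.adjoint ⟨B ⟨f t' (q m ξ),
            hf.mem_domain t' (q m ξ)⟩, hg2⟩) (f t ζA)) := by
          congr 1
          exact formB.symm
      _ = (starRingEnd ℂ) (inner ℂ (f t' (q m ζB)) (f t ζA)) := by rw [hBdjVal]
      _ = inner ℂ (f t ζA) (f t' (q m ζB)) := inner_conj_symm _ _
      _ = inner ℂ ζA (f t (f t' (q m ζB))) := sa_inner (hf.proj t).2 _ _
      _ = inner ℂ ζA (f (min t t') (q m ζB)) := by
          rw [← ContinuousLinearMap.mul_apply, fam_min hf]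
  -- convergence of the double net
  set cc : ℝ × ℝ → ℝ := fun p => (inner ℂ ζA (f p.2 (q p.1 ζB)) : ℂ).re with hcc_def
  have hccT : Tendsto cc atTop (𝓝 ((inner ℂ ζA ζB : ℂ).re)) := by
    rw [← prod_atTop_atTop_eq]
    have h1 : Tendsto (fun p : ℝ × ℝ => f p.2 (q p.1 ζB)) (atTop ×ˢ atTop) (𝓝 ζB) := by
      rw [tendsto_iff_norm_sub_tendsto_zero]
      have hq0 : Tendsto (fun s : ℝ => ‖q s ζB - ζB‖) atTop (𝓝 0) :=
        tendsto_iff_norm_sub_tendsto_zero.mp (hq.tendsto_one ζB)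
      have hf0 : Tendsto (fun t : ℝ => ‖f t ζB - ζB‖) atTop (𝓝 0) :=
        tendsto_iff_norm_sub_tendsto_zero.mp (hf.tendsto_one ζB)
      have hbound : ∀ p : ℝ × ℝ, ‖f p.2 (q p.1 ζB) - ζB‖ ≤
          ‖q p.1 ζB - ζB‖ + ‖f p.2 ζB - ζB‖ := by
        intro p
        calc ‖f p.2 (q p.1 ζB) - ζB‖
            = ‖f p.2 (q p.1 ζB - ζB) + (f p.2 ζB - ζB)‖ := by rw [map_sub]; abel_nf
          _ ≤ ‖f p.2 (q p.1 ζB - ζB)‖ + ‖f p.2 ζB - ζB‖ := norm_add_le _ _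
          _ ≤ ‖q p.1 ζB - ζB‖ + ‖f p.2 ζB - ζB‖ := by
              have := proj_contract (hf.proj p.2).1 (hf.proj p.2).2 (q p.1 ζB - ζB)
              linarith
      have hsum : Tendsto (fun p : ℝ × ℝ => ‖q p.1 ζB - ζB‖ + ‖f p.2 ζB - ζB‖)
          (atTop ×ˢ atTop) (𝓝 0) := by
        have := (hq0.comp tendsto_fst).add (hf0.comp tendsto_snd)
        simpa using this
      exact squeeze_zero (fun p => norm_nonneg _) hbound hsum
    have h2 : Tendsto (fun p : ℝ × ℝ => (inner ℂ ζA (f p.2 (q p.1 ζB)) : ℂ))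
        (atTop ×ˢ atTop) (𝓝 (inner ℂ ζA ζB)) := tendsto_const_nhds.inner h1
    exact (Complex.continuous_re.tendsto _).comp h2
  have hCS : CauchySeq gg := by
    refine cauchySeq_of_inner_inf gg cc _ (fun p p' => ?_) hccT
    rw [hInner p.1 p.2 p'.1 p'.2]
    have hfst : (p ⊓ p').1 = min p.1 p'.1 := rfl
    have hsnd : (p ⊓ p').2 = min p.2 p'.2 := rfl
    rw [hcc_def]
    simp only
    rw [hfst, hsnd]
  obtain ⟨L, hL⟩ := cauchySeq_tendsto_of_complete hCS
  have hggT : Tendsto gg (atTop ×ˢ atTop) (𝓝 L) := by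
    rw [prod_atTop_atTop_eq]; exact hL
  -- single limits
  have hSB : Tendsto (fun t => Rt t ξ) atTop (𝓝 (B ⟨ξ, hξB⟩)) :=
    tendsto_bdd hBc hBd hf ξ hξB hBB
  have hSA : Tendsto (fun s => Ts s ξ) atTop (𝓝 (A ⟨ξ, hξA⟩)) :=
    tendsto_bdd hAc hAd hq ξ hξA hAA
  -- B ξ ∈ D(A) with A (B ξ) = L
  have hφ : ∀ s, Tendsto (fun t => gg (s, t)) atTop (𝓝 (Ts s (B ⟨ξ, hξB⟩))) := fun s =>
    ((Ts s).continuous.tendsto _).comp hSB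
  have hlim1 : Tendsto (fun s => Ts s (B ⟨ξ, hξB⟩)) atTop (𝓝 L) :=
    iterated_limit gg L hggT _ hφ
  have hgr1 : ((B ⟨ξ, hξB⟩ : H), L) ∈ A.graph := by
    have htd : Tendsto (fun s => ((q s (B ⟨ξ, hξB⟩) : H), Ts s (B ⟨ξ, hξB⟩))) atTop
        (𝓝 (B ⟨ξ, hξB⟩, L)) := (hq.tendsto_one _).prodMk_nhds hlim1
    exact hAc.mem_of_tendsto htd
      (Eventually.of_forall fun s => A.mem_graph ⟨q s (B ⟨ξ, hξB⟩), hq.mem_domain s _⟩)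
  obtain ⟨y1, hy11x, hy12x⟩ := (LinearPMap.mem_graph_iff A).mp hgr1
  have hy11 : (y1 : H) = B ⟨ξ, hξB⟩ := hy11x
  have hy12 : A y1 = L := hy12x
  have h₁ : B ⟨ξ, hξB⟩ ∈ A.domain := hy11 ▸ y1.2
  have hAB1 : A ⟨B ⟨ξ, hξB⟩, h₁⟩ = L := by
    rw [← hy12]
    exact pmap_congr A hy11.symm h₁ y1.2
  -- A ξ ∈ D(B) with B (A ξ) = L
  have hggswap : Tendsto (fun p : ℝ × ℝ => gg (p.2, p.1)) (atTop ×ˢ atTop) (𝓝 L) :=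
    hggT.comp (tendsto_snd.prodMk tendsto_fst)
  have hψ : ∀ t, Tendsto (fun s => gg (s, t)) atTop (𝓝 (Rt t (A ⟨ξ, hξA⟩))) := by
    intro t
    have heq : (fun s => gg (s, t)) = fun s => Rt t (Ts s ξ) := funext fun s => hswap s t
    rw [heq]
    exact ((Rt t).continuous.tendsto _).comp hSA
  have hlim2 : Tendsto (fun t => Rt t (A ⟨ξ, hξA⟩)) atTop (𝓝 L) :=
    iterated_limit (fun p : ℝ × ℝ => gg (p.2, p.1)) L hggswap _ (fun t => hψ t)
  have hgr2 : ((A ⟨ξ, hξA⟩ : H), L) ∈ B.graph := by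
    have htd : Tendsto (fun t => ((f t (A ⟨ξ, hξA⟩) : H), Rt t (A ⟨ξ, hξA⟩))) atTop
        (𝓝 (A ⟨ξ, hξA⟩, L)) := (hf.tendsto_one _).prodMk_nhds hlim2
    exact hBc.mem_of_tendsto htd
      (Eventually.of_forall fun t => B.mem_graph ⟨f t (A ⟨ξ, hξA⟩), hf.mem_domain t _⟩)
  obtain ⟨y2, hy21x, hy22x⟩ := (LinearPMap.mem_graph_iff B).mp hgr2
  have hy21 : (y2 : H) = A ⟨ξ, hξA⟩ := hy21x
  have hy22 : B y2 = L := hy22x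
  have h₂ : A ⟨ξ, hξA⟩ ∈ B.domain := hy21 ▸ y2.2
  have hBA1 : B ⟨A ⟨ξ, hξA⟩, h₂⟩ = L := by
    rw [← hy22]
    exact pmap_congr B hy21.symm h₂ y2.2
  refine ⟨h₁, h₂, by rw [hAB1, hBA1], ?_⟩
  rw [hAB1]
  exact hggT
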